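/- In the ReLU-network setting, for every θ ∈ Θ the gradient estimator is unbiased: for every parameter component θ^k (an entry of some W_i or b_i), the partial derivative ∂/∂θ^k of θ ↦ E_z[f(θ, z)] exists and equals E_z[∂f/∂θ^k(θ, z)]. -/

import Mathlib

open MeasureTheory
open scoped BigOperators

noncomputable section

/-- Parameter space of an `n`-layer fully connected network with layer widths `κ`:
for each layer `i` a weight matrix `W_i ∈ ℝ^{κ(i+1) × κ i}` and a bias `b_i ∈ ℝ^{κ(i+1)}`. -/
abbrev NNParams (κ : ℕ → ℕ) (n : ℕ) :=
  (i : Fin n) → ((Fin (κ (i.1 + 1)) → Fin (κ i.1) → ℝ) × (Fin (κ (i.1 + 1)) → ℝ))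

/-- The layers of the ReLU network: `x₀ = z`, `x_{i+1} = max(0, W_{i+1} x_i + b_{i+1})`
entrywise for the hidden layers `i + 1 ≤ n - 1`, and the affine output layer
`x_n = W_n x_{n-1} + b_n` (junk value `0` beyond layer `n`). -/
def reluNet (κ : ℕ → ℕ) (n : ℕ) (θ : NNParams κ n) (z : Fin (κ 0) → ℝ) :
    (i : ℕ) → Fin (κ i) → ℝ
  | 0 => z
  | (i + 1) =>
    if h : i < n then
      fun j =>
        let pre := (∑ l, (θ ⟨i, h⟩).1 j l * reluNet κ n θ z i l) + (θ ⟨i, h⟩).2 j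
        if i + 2 ≤ n then max 0 pre else pre
    else 0

/-- Squared-error loss `f(θ,z) = ‖x_n(θ,z) − f̂(z)‖²` of the ReLU network. -/
def reluLoss (κ : ℕ → ℕ) (n : ℕ) (fhat : (Fin (κ 0) → ℝ) → (Fin (κ n) → ℝ))
    (θ : NNParams κ n) (z : Fin (κ 0) → ℝ) : ℝ :=
  ∑ j, (reluNet κ n θ z n j - fhat z j) ^ 2

/-- The standard Gaussian measure on `ℝ^d` (i.i.d. `N(0,1)` coordinates). -/
def stdGaussian (d : ℕ) : Measure (Fin d → ℝ) :=
  Measure.pi fun _ => ProbabilityTheory.gaussianReal 0 1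

/-- `θ` gives a.e. nonzero hidden-layer preactivations: for a.e. input `z`, every
hidden-layer preactivation `W_i^j x_{i-1} + b_i^j` is nonzero (so that `∇_θ f(θ,z)`
exists for a.e. `z`). -/
def NonzeroPreact (κ : ℕ → ℕ) (n : ℕ) (θ : NNParams κ n) : Prop :=
  ∀ᵐ z ∂(stdGaussian (κ 0)), ∀ (i : ℕ) (h : i < n), i + 2 ≤ n →
    ∀ j : Fin (κ (i + 1)),
      (∑ l, (θ ⟨i, h⟩).1 j l * reluNet κ n θ z i l) + (θ ⟨i, h⟩).2 j ≠ 0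

namespace Stmt11Aux

open ProbabilityTheory Real

/-! ### Gaussian integrability facts -/

lemma key_ineq (x : ℝ) : (1 + x ^ 2) * rexp (-(x - 0) ^ 2 / (2 * ((1:NNReal):ℝ)))
    ≤ 4 * rexp (-4⁻¹ * x ^ 2) := by
  have h1 : x ^ 2 / 4 + 1 ≤ rexp (x ^ 2 / 4) := Real.add_one_le_exp _
  have h2 : rexp (-(x - 0) ^ 2 / (2 * ((1:NNReal):ℝ))) * rexp (x ^ 2 / 4)
      = rexp (-4⁻¹ * x ^ 2) := by
    rw [← Real.exp_add]; norm_num; ring_nf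
  have h3 : (0:ℝ) < rexp (-(x - 0) ^ 2 / (2 * ((1:NNReal):ℝ))) := Real.exp_pos _
  nlinarith [mul_le_mul_of_nonneg_left h1 h3.le, sq_nonneg x]

lemma integrable_one_add_sq_gaussian :
    Integrable (fun x : ℝ => 1 + x ^ 2) (gaussianReal 0 1) := by
  rw [gaussianReal_of_var_ne_zero 0 one_ne_zero,
    integrable_withDensity_iff (measurable_gaussianPDF 0 1)
      (Filter.Eventually.of_forall fun x => ENNReal.ofReal_lt_top)]
  have hg : Integrable (fun x : ℝ => (Real.sqrt (2 * π * ((1:NNReal):ℝ)))⁻¹ *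
      (4 * rexp (-4⁻¹ * x ^ 2))) volume :=
    ((integrable_exp_neg_mul_sq (by norm_num : (0:ℝ) < 4⁻¹)).const_mul 4).const_mul _
  refine hg.mono' ?_ (Filter.Eventually.of_forall fun x => ?_)
  · exact ((continuous_const.add (continuous_pow 2)).measurable.mul
      (measurable_gaussianPDF 0 1).ennreal_toReal).aestronglyMeasurable
  · have hnn : 0 ≤ gaussianPDFReal 0 1 x := gaussianPDFReal_nonneg 0 1 x
    rw [Real.norm_eq_abs, gaussianPDF, ENNReal.toReal_ofReal hnn, gaussianPDFReal]
    rw [abs_of_nonneg (by positivity)]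
    have hc : (0:ℝ) ≤ (Real.sqrt (2 * π * ((1:NNReal):ℝ)))⁻¹ := by positivity
    nlinarith [mul_le_mul_of_nonneg_left (key_ineq x) hc,
      Real.exp_pos (-(x - 0) ^ 2 / (2 * ((1:NNReal):ℝ))), sq_nonneg x]

lemma map_eval_stdGaussian (d : ℕ) (k : Fin d) :
    (stdGaussian d).map (fun z => z k) = gaussianReal 0 1 := by
  refine Measure.ext fun s hs => ?_
  rw [_root_.stdGaussian, Measure.map_apply (measurable_pi_apply k) hs]
  have h1 : (fun z : Fin d → ℝ => z k) ⁻¹' s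
      = Set.pi Set.univ (Function.update (fun _ : Fin d => (Set.univ : Set ℝ)) k s) := by
    ext z
    simp only [Set.mem_preimage, Set.mem_univ_pi, Function.update_apply]
    constructor
    · intro hz i; split_ifs with hik
      · subst hik; exact hz
      · trivial
    · intro hz; have := hz k; simpa using this
  rw [h1, Measure.pi_pi]
  rw [Finset.prod_eq_single k]
  · simp
  · intro i _ hik; simp [Function.update_apply, hik]
  · simp

lemma integrable_comp_eval {d : ℕ} (k : Fin d) {g : ℝ → ℝ} (hg : Measurable g)
    (hgi : Integrable g (gaussianReal 0 1)) :
    Integrable (fun z : Fin d → ℝ => g (z k)) (stdGaussian d) := by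
  rw [← map_eval_stdGaussian d k] at hgi
  exact (integrable_map_measure hg.aestronglyMeasurable
    (measurable_pi_apply k).aemeasurable).mp hgi

lemma int_abs {d : ℕ} (k : Fin d) :
    Integrable (fun z : Fin d → ℝ => |z k|) (stdGaussian d) := by
  refine integrable_comp_eval k measurable_abs
    (integrable_one_add_sq_gaussian.mono' continuous_abs.aestronglyMeasurable
      (Filter.Eventually.of_forall fun x => ?_))
  rw [Real.norm_eq_abs, abs_abs]
  nlinarith [sq_nonneg (|x| - 1), sq_abs x]

lemma int_sq {d : ℕ} (k : Fin d) :
    Integrable (fun z : Fin d → ℝ => (z k) ^ 2) (stdGaussian d) := by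
  refine integrable_comp_eval k (continuous_pow 2).measurable
    (integrable_one_add_sq_gaussian.mono' (continuous_pow 2).aestronglyMeasurable
      (Filter.Eventually.of_forall fun x => ?_))
  rw [Real.norm_eq_abs, abs_pow, sq_abs]
  nlinarith [sq_nonneg x]

lemma isProb_stdGaussian (d : ℕ) : IsProbabilityMeasure (stdGaussian d) := by
  unfold _root_.stdGaussian; infer_instance

/-! ### Basic facts about `reluNet` -/

lemma reluNet_succ (κ : ℕ → ℕ) (n : ℕ) (θ : NNParams κ n) (z : Fin (κ 0) → ℝ)
    (i : ℕ) (h : i < n) (j : Fin (κ (i+1))) :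
    reluNet κ n θ z (i+1) j =
      (if i + 2 ≤ n then
        max 0 ((∑ l, (θ ⟨i, h⟩).1 j l * reluNet κ n θ z i l) + (θ ⟨i, h⟩).2 j)
       else (∑ l, (θ ⟨i, h⟩).1 j l * reluNet κ n θ z i l) + (θ ⟨i, h⟩).2 j) := by
  simp only [reluNet, dif_pos h]

lemma reluNet_stop (κ : ℕ → ℕ) (n : ℕ) (θ : NNParams κ n) (z : Fin (κ 0) → ℝ)
    (i : ℕ) (h : ¬ i < n) (j : Fin (κ (i+1))) :
    reluNet κ n θ z (i+1) j = 0 := by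
  simp [reluNet, h]

lemma weight_abs_le {κ : ℕ → ℕ} {n : ℕ} (θ : NNParams κ n) (i : Fin n)
    (j : Fin (κ (i.1 + 1))) (l : Fin (κ i.1)) : |(θ i).1 j l| ≤ ‖θ‖ := by
  have h1 : ‖(θ i).1 j l‖ ≤ ‖(θ i).1 j‖ := norm_le_pi_norm _ l
  have h2 : ‖(θ i).1 j‖ ≤ ‖(θ i).1‖ := norm_le_pi_norm _ j
  have h3 : ‖(θ i).1‖ ≤ ‖θ i‖ := norm_fst_le _
  have h4 : ‖θ i‖ ≤ ‖θ‖ := norm_le_pi_norm _ i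
  calc |(θ i).1 j l| = ‖(θ i).1 j l‖ := (Real.norm_eq_abs _).symm
  _ ≤ ‖θ‖ := by linarith

lemma bias_abs_le {κ : ℕ → ℕ} {n : ℕ} (θ : NNParams κ n) (i : Fin n)
    (j : Fin (κ (i.1 + 1))) : |(θ i).2 j| ≤ ‖θ‖ := by
  have h1 : ‖(θ i).2 j‖ ≤ ‖(θ i).2‖ := norm_le_pi_norm _ j
  have h3 : ‖(θ i).2‖ ≤ ‖θ i‖ := norm_snd_le _
  have h4 : ‖θ i‖ ≤ ‖θ‖ := norm_le_pi_norm _ i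
  calc |(θ i).2 j| = ‖(θ i).2 j‖ := (Real.norm_eq_abs _).symm
  _ ≤ ‖θ‖ := by linarith

/-! ### Growth and Lipschitz bounds for the network -/

def netC (κ : ℕ → ℕ) (M : ℝ) : ℕ → ℝ
  | 0 => 1
  | i+1 => ((κ i : ℝ) * netC κ M i + 1) * M

def netL (κ : ℕ → ℕ) (M : ℝ) : ℕ → ℝ
  | 0 => 0
  | i+1 => (κ i : ℝ) * (netC κ M i + M * netL κ M i) + 1

lemma netC_nonneg {κ : ℕ → ℕ} {M : ℝ} (hM : 1 ≤ M) : ∀ i, 0 ≤ netC κ M i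
  | 0 => zero_le_one
  | i+1 => by
    have h := netC_nonneg (κ := κ) hM i
    have h0 : (0:ℝ) ≤ (κ i : ℝ) := Nat.cast_nonneg _
    simp only [netC]
    nlinarith [mul_nonneg h0 h, mul_nonneg (add_nonneg (mul_nonneg h0 h) zero_le_one)
      (le_trans zero_le_one hM)]

lemma netL_nonneg {κ : ℕ → ℕ} {M : ℝ} (hM : 1 ≤ M) : ∀ i, 0 ≤ netL κ M i
  | 0 => le_refl 0
  | i+1 => by
    have h := netL_nonneg (κ := κ) hM i
    have hC := netC_nonneg (κ := κ) hM i
    have h0 : (0:ℝ) ≤ (κ i : ℝ) := Nat.cast_nonneg _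
    simp only [netL]
    nlinarith [mul_nonneg h0 (add_nonneg hC (mul_nonneg (le_trans zero_le_one hM) h))]

lemma net_bound {κ : ℕ → ℕ} {n : ℕ} {M : ℝ} (hM : 1 ≤ M) {θ : NNParams κ n}
    (hθ : ‖θ‖ ≤ M) (z : Fin (κ 0) → ℝ) :
    ∀ i (j : Fin (κ i)), |reluNet κ n θ z i j| ≤ netC κ M i * (1 + ∑ k, |z k|) := by
  have hS : 1 ≤ 1 + ∑ k, |z k| :=
    le_add_of_nonneg_right (Finset.sum_nonneg fun k _ => abs_nonneg _)
  have hM0 : (0:ℝ) ≤ M := le_trans zero_le_one hM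
  intro i
  induction i with
  | zero =>
    intro j
    have h := Finset.single_le_sum (f := fun k => |z k|)
      (fun k _ => abs_nonneg (z k)) (Finset.mem_univ j)
    simp only [reluNet, netC, one_mul]
    linarith
  | succ i ih =>
    intro j
    by_cases h : i < n
    · have hC := netC_nonneg (κ := κ) (M := M) hM i
      have hpre : |(∑ l, (θ ⟨i, h⟩).1 j l * reluNet κ n θ z i l) + (θ ⟨i, h⟩).2 j|
          ≤ netC κ M (i+1) * (1 + ∑ k, |z k|) := by
        have hsum : |∑ l, (θ ⟨i, h⟩).1 j l * reluNet κ n θ z i l|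
            ≤ ∑ _l : Fin (κ i), M * (netC κ M i * (1 + ∑ k, |z k|)) := by
          refine (Finset.abs_sum_le_sum_abs _ _).trans (Finset.sum_le_sum fun l _ => ?_)
          rw [abs_mul]
          exact mul_le_mul ((weight_abs_le θ ⟨i, h⟩ j l).trans hθ) (ih l) (abs_nonneg _)
            hM0
        have hb : |(θ ⟨i, h⟩).2 j| ≤ M := (bias_abs_le θ ⟨i, h⟩ j).trans hθ
        have h2 : |(∑ l, (θ ⟨i, h⟩).1 j l * reluNet κ n θ z i l) + (θ ⟨i, h⟩).2 j|
            ≤ (κ i : ℝ) * (M * (netC κ M i * (1 + ∑ k, |z k|))) + M := by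
          refine (abs_add_le _ _).trans (add_le_add (hsum.trans ?_) hb)
          rw [Finset.sum_const, Finset.card_univ, Fintype.card_fin, nsmul_eq_mul]
        refine h2.trans ?_
        simp only [netC]
        have h3 : (0:ℝ) ≤ (κ i : ℝ) := Nat.cast_nonneg _
        nlinarith [mul_nonneg hM0 (sub_nonneg.mpr hS),
          mul_nonneg (mul_nonneg h3 hC) (mul_nonneg hM0 (sub_nonneg.mpr hS))]
      rw [reluNet_succ κ n θ z i h j]
      split_ifs with h2
      · refine le_trans ?_ hpre
        have hnn := le_max_left (0:ℝ)
          ((∑ l, (θ ⟨i, h⟩).1 j l * reluNet κ n θ z i l) + (θ ⟨i, h⟩).2 j)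
        rw [abs_of_nonneg hnn]
        exact max_le (abs_nonneg _) (le_abs_self _)
      · exact hpre
    · rw [reluNet_stop κ n θ z i h j]
      simp only [abs_zero]
      have hC := netC_nonneg (κ := κ) (M := M) hM (i+1)
      nlinarith

lemma net_lip {κ : ℕ → ℕ} {n : ℕ} {M : ℝ} (hM : 1 ≤ M) {θ₁ θ₂ : NNParams κ n}
    (h1 : ‖θ₁‖ ≤ M) (h2 : ‖θ₂‖ ≤ M) (z : Fin (κ 0) → ℝ) :
    ∀ i (j : Fin (κ i)), |reluNet κ n θ₁ z i j - reluNet κ n θ₂ z i j|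
      ≤ netL κ M i * (1 + ∑ k, |z k|) * ‖θ₁ - θ₂‖ := by
  have hS : 1 ≤ 1 + ∑ k, |z k| :=
    le_add_of_nonneg_right (Finset.sum_nonneg fun k _ => abs_nonneg _)
  have hM0 : (0:ℝ) ≤ M := le_trans zero_le_one hM
  have hΔ : (0:ℝ) ≤ ‖θ₁ - θ₂‖ := norm_nonneg _
  intro i
  induction i with
  | zero =>
    intro j
    have e : reluNet κ n θ₁ z 0 j - reluNet κ n θ₂ z 0 j = 0 := by
      simp only [reluNet, sub_self]
    rw [e, abs_zero]
    simp only [netL, zero_mul]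
    exact le_refl 0
  | succ i ih =>
    intro j
    by_cases h : i < n
    · have hC := netC_nonneg (κ := κ) (M := M) hM i
      have hL := netL_nonneg (κ := κ) (M := M) hM i
      have key : |((∑ l, (θ₁ ⟨i, h⟩).1 j l * reluNet κ n θ₁ z i l) + (θ₁ ⟨i, h⟩).2 j)
          - ((∑ l, (θ₂ ⟨i, h⟩).1 j l * reluNet κ n θ₂ z i l) + (θ₂ ⟨i, h⟩).2 j)|
          ≤ netL κ M (i+1) * (1 + ∑ k, |z k|) * ‖θ₁ - θ₂‖ := by
        have hterm : ∀ l : Fin (κ i),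
            |(θ₁ ⟨i, h⟩).1 j l * reluNet κ n θ₁ z i l
              - (θ₂ ⟨i, h⟩).1 j l * reluNet κ n θ₂ z i l|
            ≤ ‖θ₁ - θ₂‖ * (netC κ M i * (1 + ∑ k, |z k|))
              + M * (netL κ M i * (1 + ∑ k, |z k|) * ‖θ₁ - θ₂‖) := by
          intro l
          have e : (θ₁ ⟨i, h⟩).1 j l * reluNet κ n θ₁ z i l
              - (θ₂ ⟨i, h⟩).1 j l * reluNet κ n θ₂ z i l
              = ((θ₁ ⟨i, h⟩).1 j l - (θ₂ ⟨i, h⟩).1 j l) * reluNet κ n θ₁ z i l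
                + (θ₂ ⟨i, h⟩).1 j l * (reluNet κ n θ₁ z i l - reluNet κ n θ₂ z i l) := by
            ring
          rw [e]
          refine (abs_add_le _ _).trans (add_le_add ?_ ?_)
          · rw [abs_mul]
            refine mul_le_mul ?_ (net_bound hM h1 z i l) (abs_nonneg _) hΔ
            have e2 : (θ₁ ⟨i, h⟩).1 j l - (θ₂ ⟨i, h⟩).1 j l
                = ((θ₁ - θ₂) ⟨i, h⟩).1 j l := by simp
            rw [e2]
            exact weight_abs_le (θ₁ - θ₂) ⟨i, h⟩ j l
          · rw [abs_mul]
            exact mul_le_mul ((weight_abs_le θ₂ ⟨i, h⟩ j l).trans h2) (ih l)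
              (abs_nonneg _) hM0
        have e0 : ((∑ l, (θ₁ ⟨i, h⟩).1 j l * reluNet κ n θ₁ z i l) + (θ₁ ⟨i, h⟩).2 j)
            - ((∑ l, (θ₂ ⟨i, h⟩).1 j l * reluNet κ n θ₂ z i l) + (θ₂ ⟨i, h⟩).2 j)
            = (∑ l, ((θ₁ ⟨i, h⟩).1 j l * reluNet κ n θ₁ z i l
                - (θ₂ ⟨i, h⟩).1 j l * reluNet κ n θ₂ z i l))
              + ((θ₁ ⟨i, h⟩).2 j - (θ₂ ⟨i, h⟩).2 j) := by
          rw [Finset.sum_sub_distrib]; ring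
        have hb : |(θ₁ ⟨i, h⟩).2 j - (θ₂ ⟨i, h⟩).2 j| ≤ ‖θ₁ - θ₂‖ := by
          have e2 : (θ₁ ⟨i, h⟩).2 j - (θ₂ ⟨i, h⟩).2 j = ((θ₁ - θ₂) ⟨i, h⟩).2 j := by simp
          rw [e2]
          exact bias_abs_le (θ₁ - θ₂) ⟨i, h⟩ j
        rw [e0]
        refine (abs_add_le _ _).trans ?_
        have hsum : |∑ l, ((θ₁ ⟨i, h⟩).1 j l * reluNet κ n θ₁ z i l
            - (θ₂ ⟨i, h⟩).1 j l * reluNet κ n θ₂ z i l)|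
            ≤ (κ i : ℝ) * (‖θ₁ - θ₂‖ * (netC κ M i * (1 + ∑ k, |z k|))
              + M * (netL κ M i * (1 + ∑ k, |z k|) * ‖θ₁ - θ₂‖)) := by
          refine (Finset.abs_sum_le_sum_abs _ _).trans ?_
          refine (Finset.sum_le_sum fun l _ => hterm l).trans ?_
          rw [Finset.sum_const, Finset.card_univ, Fintype.card_fin, nsmul_eq_mul]
        refine (add_le_add hsum hb).trans ?_
        simp only [netL]
        have h3 : (0:ℝ) ≤ (κ i : ℝ) := Nat.cast_nonneg _
        nlinarith [mul_nonneg hΔ (sub_nonneg.mpr hS)]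
      rw [reluNet_succ κ n θ₁ z i h j, reluNet_succ κ n θ₂ z i h j]
      split_ifs with h2
      · rw [max_comm (0:ℝ) ((∑ l, (θ₁ ⟨i, h⟩).1 j l * reluNet κ n θ₁ z i l) + (θ₁ ⟨i, h⟩).2 j),
          max_comm (0:ℝ) ((∑ l, (θ₂ ⟨i, h⟩).1 j l * reluNet κ n θ₂ z i l) + (θ₂ ⟨i, h⟩).2 j)]
        exact (abs_max_sub_max_le_abs _ _ _).trans key
      · exact key
    · rw [reluNet_stop κ n θ₁ z i h j, reluNet_stop κ n θ₂ z i h j]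
      simp only [sub_zero, abs_zero]
      have hL := netL_nonneg (κ := κ) (M := M) hM (i+1)
      have : (0:ℝ) ≤ 1 + ∑ k, |z k| := by linarith
      exact mul_nonneg (mul_nonneg hL this) hΔ

/-! ### Continuity -/

lemma net_cont {κ : ℕ → ℕ} {n : ℕ} :
    ∀ i (j : Fin (κ i)),
      Continuous (fun p : NNParams κ n × (Fin (κ 0) → ℝ) => reluNet κ n p.1 p.2 i j) := by
  intro i
  induction i with
  | zero =>
    intro j
    have : (fun p : NNParams κ n × (Fin (κ 0) → ℝ) => reluNet κ n p.1 p.2 0 j)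
        = fun p => p.2 j := by
      funext p; simp [reluNet]
    rw [this]
    exact (continuous_apply j).comp continuous_snd
  | succ i ih =>
    intro j
    by_cases h : i < n
    · have hW : ∀ l : Fin (κ i), Continuous
          (fun p : NNParams κ n × (Fin (κ 0) → ℝ) => (p.1 ⟨i, h⟩).1 j l) := fun l =>
        (continuous_apply l).comp ((continuous_apply j).comp
          (continuous_fst.comp ((continuous_apply (⟨i, h⟩ : Fin n)).comp continuous_fst)))
      have hB : Continuous (fun p : NNParams κ n × (Fin (κ 0) → ℝ) => (p.1 ⟨i, h⟩).2 j) :=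
        (continuous_apply j).comp (continuous_snd.comp
          ((continuous_apply (⟨i, h⟩ : Fin n)).comp continuous_fst))
      have hpre : Continuous (fun p : NNParams κ n × (Fin (κ 0) → ℝ) =>
          (∑ l, (p.1 ⟨i, h⟩).1 j l * reluNet κ n p.1 p.2 i l) + (p.1 ⟨i, h⟩).2 j) := by
        refine Continuous.add ?_ hB
        exact continuous_finset_sum _ fun l _ => (hW l).mul (ih l)
      have heq : (fun p : NNParams κ n × (Fin (κ 0) → ℝ) => reluNet κ n p.1 p.2 (i+1) j)
          = fun p => (if i + 2 ≤ n then
              max 0 ((∑ l, (p.1 ⟨i, h⟩).1 j l * reluNet κ n p.1 p.2 i l) + (p.1 ⟨i, h⟩).2 j)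
            else (∑ l, (p.1 ⟨i, h⟩).1 j l * reluNet κ n p.1 p.2 i l) + (p.1 ⟨i, h⟩).2 j) := by
        funext p; exact reluNet_succ κ n p.1 p.2 i h j
      rw [heq]
      split_ifs with h2
      · exact continuous_const.max hpre
      · exact hpre
    · have heq : (fun p : NNParams κ n × (Fin (κ 0) → ℝ) => reluNet κ n p.1 p.2 (i+1) j)
          = fun _ => 0 := by
        funext p; exact reluNet_stop κ n p.1 p.2 i h j
      rw [heq]
      exact continuous_const

lemma loss_measurable {κ : ℕ → ℕ} {n : ℕ}
    {fhat : (Fin (κ 0) → ℝ) → (Fin (κ n) → ℝ)} (hfhat : Measurable fhat)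
    (θ : NNParams κ n) : Measurable (fun z => reluLoss κ n fhat θ z) := by
  unfold reluLoss
  refine Finset.measurable_sum _ fun j _ => Measurable.pow_const ?_ 2
  refine Measurable.sub ?_ ((measurable_pi_apply j).comp hfhat)
  have hc : Continuous (fun z : Fin (κ 0) → ℝ => reluNet κ n θ z n j) :=
    (net_cont n j).comp (Continuous.prodMk_right θ)
  exact hc.measurable

/-! ### Pointwise differentiability in the parameter -/

lemma net_hasDeriv {κ : ℕ → ℕ} {n : ℕ} (θ v : NNParams κ n) (z : Fin (κ 0) → ℝ)
    (hz : ∀ (i : ℕ) (h : i < n), i + 2 ≤ n → ∀ j : Fin (κ (i + 1)),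
      (∑ l, (θ ⟨i, h⟩).1 j l * reluNet κ n θ z i l) + (θ ⟨i, h⟩).2 j ≠ 0) :
    ∀ i (j : Fin (κ i)), ∃ D, HasDerivAt (fun t : ℝ => reluNet κ n (θ + t • v) z i j) D 0 := by
  intro i
  induction i with
  | zero =>
    intro j
    refine ⟨0, ?_⟩
    have : (fun t : ℝ => reluNet κ n (θ + t • v) z 0 j) = fun _ => z j := by
      funext t; simp [reluNet]
    rw [this]
    exact hasDerivAt_const _ _
  | succ i ih =>
    intro j
    by_cases h : i < n
    · choose D hD using ih
      set pre : ℝ → ℝ := fun t =>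
        (∑ l, ((θ ⟨i, h⟩).1 j l + t * (v ⟨i, h⟩).1 j l) * reluNet κ n (θ + t • v) z i l)
          + ((θ ⟨i, h⟩).2 j + t * (v ⟨i, h⟩).2 j) with hpre_def
      have happly : ∀ (t : ℝ) (l : Fin (κ i)),
          ((θ + t • v) ⟨i, h⟩).1 j l = (θ ⟨i, h⟩).1 j l + t * (v ⟨i, h⟩).1 j l := by
        intro t l; simp [Prod.fst_add]
      have happly2 : ∀ t : ℝ,
          ((θ + t • v) ⟨i, h⟩).2 j = (θ ⟨i, h⟩).2 j + t * (v ⟨i, h⟩).2 j := by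
        intro t; simp [Prod.snd_add]
      have hpre_eq : ∀ t : ℝ, reluNet κ n (θ + t • v) z (i+1) j =
          if i + 2 ≤ n then max 0 (pre t) else pre t := by
        intro t
        rw [reluNet_succ κ n (θ + t • v) z i h j]
        have e : (∑ l, ((θ + t • v) ⟨i, h⟩).1 j l * reluNet κ n (θ + t • v) z i l)
            + ((θ + t • v) ⟨i, h⟩).2 j = pre t := by
          simp only [hpre_def]
          exact congrArg₂ (· + ·)
            (Finset.sum_congr rfl fun l _ => by rw [happly]) (happly2 t)
        rw [e]
      have haffW : ∀ l : Fin (κ i), HasDerivAt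
          (fun t : ℝ => (θ ⟨i, h⟩).1 j l + t * (v ⟨i, h⟩).1 j l) ((v ⟨i, h⟩).1 j l) 0 := by
        intro l
        simpa using ((hasDerivAt_id (0:ℝ)).mul_const ((v ⟨i, h⟩).1 j l)).const_add
          ((θ ⟨i, h⟩).1 j l)
      have haffB : HasDerivAt
          (fun t : ℝ => (θ ⟨i, h⟩).2 j + t * (v ⟨i, h⟩).2 j) ((v ⟨i, h⟩).2 j) 0 := by
        simpa using ((hasDerivAt_id (0:ℝ)).mul_const ((v ⟨i, h⟩).2 j)).const_add
          ((θ ⟨i, h⟩).2 j)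
      have hpreD : HasDerivAt pre
          ((∑ l, ((v ⟨i, h⟩).1 j l * reluNet κ n (θ + (0:ℝ) • v) z i l
            + ((θ ⟨i, h⟩).1 j l + 0 * (v ⟨i, h⟩).1 j l) * D l)) + (v ⟨i, h⟩).2 j) 0 := by
        rw [hpre_def]
        exact (HasDerivAt.fun_sum fun l _ => (haffW l).mul (hD l)).add haffB
      have hcont : Continuous pre := by
        rw [hpre_def]
        refine Continuous.add (continuous_finset_sum _ fun l _ => Continuous.mul ?_ ?_) ?_
        · exact continuous_const.add (continuous_id.mul continuous_const)
        · exact (net_cont i l).comp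
            ((continuous_const.add (continuous_id.smul continuous_const)).prodMk
              continuous_const)
        · exact continuous_const.add (continuous_id.mul continuous_const)
      by_cases h2 : i + 2 ≤ n
      · have hpre0 : pre 0 ≠ 0 := by
          have e : pre 0 = (∑ l, (θ ⟨i, h⟩).1 j l * reluNet κ n θ z i l)
              + (θ ⟨i, h⟩).2 j := by
            rw [hpre_def]
            simp
          rw [e]
          exact hz i h h2 j
        rcases lt_or_gt_of_ne hpre0 with hneg | hpos
        · have hev : ∀ᶠ t in nhds (0:ℝ), pre t < 0 :=
            (hcont.tendsto 0).eventually_lt_const hneg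
          refine ⟨0, HasDerivAt.congr_of_eventuallyEq (hasDerivAt_const (0:ℝ) (0:ℝ)) ?_⟩
          filter_upwards [hev] with t ht
          rw [hpre_eq t, if_pos h2, max_eq_left ht.le]
        · have hev : ∀ᶠ t in nhds (0:ℝ), 0 < pre t :=
            (hcont.tendsto 0).eventually_const_lt hpos
          refine ⟨_, HasDerivAt.congr_of_eventuallyEq hpreD ?_⟩
          filter_upwards [hev] with t ht
          rw [hpre_eq t, if_pos h2, max_eq_right ht.le]
      · refine ⟨(∑ l, ((v ⟨i, h⟩).1 j l * reluNet κ n (θ + (0:ℝ) • v) z i l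
            + ((θ ⟨i, h⟩).1 j l + 0 * (v ⟨i, h⟩).1 j l) * D l)) + (v ⟨i, h⟩).2 j, ?_⟩
        have e : (fun t : ℝ => reluNet κ n (θ + t • v) z (i+1) j) = pre := by
          funext t; rw [hpre_eq t, if_neg h2]
        rw [e]
        exact hpreD
    · refine ⟨0, ?_⟩
      have e : (fun t : ℝ => reluNet κ n (θ + t • v) z (i+1) j) = fun _ => 0 := by
        funext t; exact reluNet_stop κ n (θ + t • v) z i h j
      rw [e]
      exact hasDerivAt_const _ _

lemma loss_hasDeriv {κ : ℕ → ℕ} {n : ℕ}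
    (fhat : (Fin (κ 0) → ℝ) → (Fin (κ n) → ℝ)) (θ v : NNParams κ n) (z : Fin (κ 0) → ℝ)
    (hz : ∀ (i : ℕ) (h : i < n), i + 2 ≤ n → ∀ j : Fin (κ (i + 1)),
      (∑ l, (θ ⟨i, h⟩).1 j l * reluNet κ n θ z i l) + (θ ⟨i, h⟩).2 j ≠ 0) :
    ∃ D, HasDerivAt (fun t : ℝ => reluLoss κ n fhat (θ + t • v) z) D 0 := by
  choose D hD using net_hasDeriv θ v z hz n
  refine ⟨∑ j, (2 * (reluNet κ n (θ + (0:ℝ) • v) z n j - fhat z j) ^ 1 * D j), ?_⟩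
  have : HasDerivAt (fun t : ℝ => ∑ j, (reluNet κ n (θ + t • v) z n j - fhat z j) ^ 2)
      (∑ j, (2 * (reluNet κ n (θ + (0:ℝ) • v) z n j - fhat z j) ^ 1 * D j)) 0 := by
    refine HasDerivAt.fun_sum fun j _ => ?_
    exact ((hD j).sub_const (fhat z j)).pow 2
  exact this

/-! ### Loss bounds -/

lemma loss_bound {κ : ℕ → ℕ} {n : ℕ} {M : ℝ} (hM : 1 ≤ M)
    (fhat : (Fin (κ 0) → ℝ) → (Fin (κ n) → ℝ)) {θ : NNParams κ n}
    (hθ : ‖θ‖ ≤ M) (z : Fin (κ 0) → ℝ) :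
    |reluLoss κ n fhat θ z| ≤ 2 * (κ n : ℝ) * (netC κ M n) ^ 2 * (1 + ∑ k, |z k|) ^ 2
      + 2 * ∑ j, (fhat z j) ^ 2 := by
  have hS : 1 ≤ 1 + ∑ k, |z k| :=
    le_add_of_nonneg_right (Finset.sum_nonneg fun k _ => abs_nonneg _)
  have hC := netC_nonneg (κ := κ) (M := M) hM n
  have h1 : |reluLoss κ n fhat θ z| = ∑ j, (reluNet κ n θ z n j - fhat z j) ^ 2 := by
    rw [reluLoss, abs_of_nonneg (Finset.sum_nonneg fun j _ => sq_nonneg _)]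
  rw [h1]
  have h2 : ∀ j, (reluNet κ n θ z n j - fhat z j) ^ 2
      ≤ 2 * (netC κ M n) ^ 2 * (1 + ∑ k, |z k|) ^ 2 + 2 * (fhat z j) ^ 2 := by
    intro j
    have hb := net_bound hM hθ z n j
    have ha : (0:ℝ) ≤ |reluNet κ n θ z n j| := abs_nonneg _
    nlinarith [sq_nonneg (reluNet κ n θ z n j + fhat z j), sq_abs (reluNet κ n θ z n j),
      mul_le_mul hb hb ha (mul_nonneg hC (by linarith))]
  refine (Finset.sum_le_sum fun j _ => h2 j).trans ?_
  rw [Finset.sum_add_distrib, Finset.sum_const, Finset.card_univ, Fintype.card_fin,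
    nsmul_eq_mul, ← Finset.mul_sum]
  ring_nf
  exact le_refl _

lemma loss_lip {κ : ℕ → ℕ} {n : ℕ} {M : ℝ} (hM : 1 ≤ M)
    (fhat : (Fin (κ 0) → ℝ) → (Fin (κ n) → ℝ)) {θ₁ θ₂ : NNParams κ n}
    (h1 : ‖θ₁‖ ≤ M) (h2 : ‖θ₂‖ ≤ M) (z : Fin (κ 0) → ℝ) :
    |reluLoss κ n fhat θ₁ z - reluLoss κ n fhat θ₂ z|
      ≤ (netL κ M n * (1 + ∑ k, |z k|) * ‖θ₁ - θ₂‖)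
        * ((κ n : ℝ) * (2 * (netC κ M n * (1 + ∑ k, |z k|))) + 2 * ∑ j, |fhat z j|) := by
  have hS : 1 ≤ 1 + ∑ k, |z k| :=
    le_add_of_nonneg_right (Finset.sum_nonneg fun k _ => abs_nonneg _)
  have hC := netC_nonneg (κ := κ) (M := M) hM n
  have hL := netL_nonneg (κ := κ) (M := M) hM n
  have hΔ : (0:ℝ) ≤ ‖θ₁ - θ₂‖ := norm_nonneg _
  have e0 : reluLoss κ n fhat θ₁ z - reluLoss κ n fhat θ₂ z
      = ∑ j, ((reluNet κ n θ₁ z n j - fhat z j) ^ 2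
        - (reluNet κ n θ₂ z n j - fhat z j) ^ 2) := by
    rw [reluLoss, reluLoss, Finset.sum_sub_distrib]
  rw [e0]
  refine (Finset.abs_sum_le_sum_abs _ _).trans ?_
  have h3 : ∀ j, |(reluNet κ n θ₁ z n j - fhat z j) ^ 2
      - (reluNet κ n θ₂ z n j - fhat z j) ^ 2|
      ≤ (netL κ M n * (1 + ∑ k, |z k|) * ‖θ₁ - θ₂‖)
        * (2 * (netC κ M n * (1 + ∑ k, |z k|)) + 2 * |fhat z j|) := by
    intro j
    have e : (reluNet κ n θ₁ z n j - fhat z j) ^ 2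
        - (reluNet κ n θ₂ z n j - fhat z j) ^ 2
        = (reluNet κ n θ₁ z n j - reluNet κ n θ₂ z n j)
          * (reluNet κ n θ₁ z n j + reluNet κ n θ₂ z n j - 2 * fhat z j) := by ring
    rw [e, abs_mul]
    refine mul_le_mul (net_lip hM h1 h2 z n j) ?_ (abs_nonneg _) ?_
    · have b1 := net_bound hM h1 z n j
      have b2 := net_bound hM h2 z n j
      have t1 : |reluNet κ n θ₁ z n j + reluNet κ n θ₂ z n j - 2 * fhat z j|
          ≤ |reluNet κ n θ₁ z n j| + |reluNet κ n θ₂ z n j| + 2 * |fhat z j| := by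
        have := abs_add_le (reluNet κ n θ₁ z n j + reluNet κ n θ₂ z n j) (-(2 * fhat z j))
        have h4 := abs_add_le (reluNet κ n θ₁ z n j) (reluNet κ n θ₂ z n j)
        simp only [abs_neg, abs_mul, abs_two] at this
        have e2 : reluNet κ n θ₁ z n j + reluNet κ n θ₂ z n j - 2 * fhat z j
            = (reluNet κ n θ₁ z n j + reluNet κ n θ₂ z n j) + (-(2 * fhat z j)) := by ring
        rw [e2]
        calc |(reluNet κ n θ₁ z n j + reluNet κ n θ₂ z n j) + (-(2 * fhat z j))|
            ≤ |reluNet κ n θ₁ z n j + reluNet κ n θ₂ z n j| + |(-(2 * fhat z j))| :=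
              abs_add_le _ _
        _ ≤ |reluNet κ n θ₁ z n j| + |reluNet κ n θ₂ z n j| + 2 * |fhat z j| := by
              rw [abs_neg, abs_mul, abs_two]; linarith
      refine t1.trans ?_
      linarith
    · exact mul_nonneg (mul_nonneg hL (by linarith)) hΔ
  refine (Finset.sum_le_sum fun j _ => h3 j).trans ?_
  rw [← Finset.mul_sum]
  rw [Finset.sum_add_distrib, Finset.sum_const, Finset.card_univ, Fintype.card_fin,
    nsmul_eq_mul, ← Finset.mul_sum]

lemma loss_lip' {κ : ℕ → ℕ} {n : ℕ} {M : ℝ} (hM : 1 ≤ M)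
    (fhat : (Fin (κ 0) → ℝ) → (Fin (κ n) → ℝ)) {θ₁ θ₂ : NNParams κ n}
    (h1 : ‖θ₁‖ ≤ M) (h2 : ‖θ₂‖ ≤ M) (z : Fin (κ 0) → ℝ) :
    |reluLoss κ n fhat θ₁ z - reluLoss κ n fhat θ₂ z|
      ≤ ((netL κ M n * (2 * (κ n : ℝ) * netC κ M n)) * (1 + ∑ k, |z k|) ^ 2
        + ((netL κ M n * (κ n : ℝ)) * (1 + ∑ k, |z k|)
          + netL κ M n * ((1 + ∑ k, |z k|) * ∑ j, (fhat z j) ^ 2))) * ‖θ₁ - θ₂‖ := by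
  have hS : 1 ≤ 1 + ∑ k, |z k| :=
    le_add_of_nonneg_right (Finset.sum_nonneg fun k _ => abs_nonneg _)
  have hC := netC_nonneg (κ := κ) (M := M) hM n
  have hL := netL_nonneg (κ := κ) (M := M) hM n
  have hΔ : (0:ℝ) ≤ ‖θ₁ - θ₂‖ := norm_nonneg _
  have hT : 2 * ∑ j, |fhat z j| ≤ (κ n : ℝ) + ∑ j, (fhat z j) ^ 2 := by
    have hj : ∀ j, 2 * |fhat z j| ≤ 1 + (fhat z j) ^ 2 := fun j => by
      nlinarith [sq_nonneg (|fhat z j| - 1), sq_abs (fhat z j)]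
    calc 2 * ∑ j, |fhat z j| = ∑ j, 2 * |fhat z j| := by rw [Finset.mul_sum]
    _ ≤ ∑ j, (1 + (fhat z j) ^ 2) := Finset.sum_le_sum fun j _ => hj j
    _ = (κ n : ℝ) + ∑ j, (fhat z j) ^ 2 := by
        rw [Finset.sum_add_distrib, Finset.sum_const, Finset.card_univ, Fintype.card_fin,
          nsmul_eq_mul, mul_one]
  have h0 : (0:ℝ) ≤ netL κ M n * (1 + ∑ k, |z k|) * ‖θ₁ - θ₂‖ :=
    mul_nonneg (mul_nonneg hL (by linarith)) hΔ
  refine (loss_lip hM fhat h1 h2 z).trans ?_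
  calc (netL κ M n * (1 + ∑ k, |z k|) * ‖θ₁ - θ₂‖)
      * ((κ n : ℝ) * (2 * (netC κ M n * (1 + ∑ k, |z k|))) + 2 * ∑ j, |fhat z j|)
      ≤ (netL κ M n * (1 + ∑ k, |z k|) * ‖θ₁ - θ₂‖)
        * ((κ n : ℝ) * (2 * (netC κ M n * (1 + ∑ k, |z k|)))
          + ((κ n : ℝ) + ∑ j, (fhat z j) ^ 2)) :=
      mul_le_mul_of_nonneg_left (by linarith) h0
  _ = ((netL κ M n * (2 * (κ n : ℝ) * netC κ M n)) * (1 + ∑ k, |z k|) ^ 2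
        + ((netL κ M n * (κ n : ℝ)) * (1 + ∑ k, |z k|)
          + netL κ M n * ((1 + ∑ k, |z k|) * ∑ j, (fhat z j) ^ 2))) * ‖θ₁ - θ₂‖ := by
      ring

end Stmt11Aux

/-- **Unbiasedness of the gradient estimator for the ReLU network (Theorem 2.5, item 1).**
For every `θ ∈ Θ` and every parameter component (an entry `(j,l)` of a weight matrix `W_i`
or an entry `j` of a bias `b_i`), the partial derivative of the expected loss
`θ ↦ E_z[f(θ,z)]` in that coordinate direction exists and equals the expectation
`E_z[∂f/∂θ^k(θ,z)]` of the pointwise partial derivative (which exists for a.e. `z`). -/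
theorem stmt_11 (κ : ℕ → ℕ) (n : ℕ) (hn : 1 ≤ n)
    (fhat : (Fin (κ 0) → ℝ) → (Fin (κ n) → ℝ)) (hfhat : Measurable fhat)
    (hmom0 : Integrable (fun z => ∑ j, (fhat z j) ^ 2) (stdGaussian (κ 0)))
    (hmom1 : ∀ k : Fin (κ 0),
      Integrable (fun z => (∑ j, (fhat z j) ^ 2) * |z k|) (stdGaussian (κ 0)))
    (hmom2 : ∀ k : Fin (κ 0),
      Integrable (fun z => (∑ j, (fhat z j) ^ 2) * |z k| ^ 2) (stdGaussian (κ 0)))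
    (hmom3 : ∀ k : Fin (κ 0),
      Integrable (fun z => Real.sqrt (∑ j, (fhat z j) ^ 2) * |z k| ^ 2) (stdGaussian (κ 0)))
    (hmom4 : ∀ k : Fin (κ 0),
      Integrable (fun z => (∑ j, (fhat z j) ^ 2) * |z k| ^ 3) (stdGaussian (κ 0)))
    (Θ : Set (NNParams κ n)) (hΘb : Bornology.IsBounded Θ) (hΘc : Convex ℝ Θ)
    (hΘd : ∀ θ ∈ Θ, NonzeroPreact κ n θ) :
    ∀ θ ∈ Θ, ∀ i : Fin n,
      (∀ (j : Fin (κ (i.1 + 1))) (l : Fin (κ i.1)),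
        HasLineDerivAt ℝ (fun θ' => ∫ z, reluLoss κ n fhat θ' z ∂(stdGaussian (κ 0)))
          (∫ z, lineDeriv ℝ (fun θ' => reluLoss κ n fhat θ' z) θ
              (Pi.single i (Pi.single j (Pi.single l 1), 0)) ∂(stdGaussian (κ 0)))
          θ (Pi.single i (Pi.single j (Pi.single l 1), 0))) ∧
      (∀ j : Fin (κ (i.1 + 1)),
        HasLineDerivAt ℝ (fun θ' => ∫ z, reluLoss κ n fhat θ' z ∂(stdGaussian (κ 0)))
          (∫ z, lineDeriv ℝ (fun θ' => reluLoss κ n fhat θ' z) θ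
              (Pi.single i (0, Pi.single j 1)) ∂(stdGaussian (κ 0)))
          θ (Pi.single i (0, Pi.single j 1))) := by
  intro θ hθ i
  have main : ∀ v : NNParams κ n,
      HasLineDerivAt ℝ (fun θ' => ∫ z, reluLoss κ n fhat θ' z ∂(stdGaussian (κ 0)))
        (∫ z, lineDeriv ℝ (fun θ' => reluLoss κ n fhat θ' z) θ v ∂(stdGaussian (κ 0)))
        θ v := by
    intro v
    have hprob : IsProbabilityMeasure (stdGaussian (κ 0)) := Stmt11Aux.isProb_stdGaussian _
    set M : ℝ := ‖θ‖ + ‖v‖ + 1 with hM_def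
    have hM : 1 ≤ M := by
      have h1 := norm_nonneg θ; have h2 := norm_nonneg v
      simp only [hM_def]; linarith
    have hball : ∀ t : ℝ, |t| ≤ 1 → ‖θ + t • v‖ ≤ M := by
      intro t ht
      refine (norm_add_le _ _).trans ?_
      rw [norm_smul, Real.norm_eq_abs]
      have h1 : |t| * ‖v‖ ≤ 1 * ‖v‖ := mul_le_mul_of_nonneg_right ht (norm_nonneg v)
      rw [one_mul] at h1
      simp only [hM_def]; linarith
    have hC := Stmt11Aux.netC_nonneg (κ := κ) (M := M) hM n
    have hL := Stmt11Aux.netL_nonneg (κ := κ) (M := M) hM n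
    -- the dominating Lipschitz bound
    set bound : (Fin (κ 0) → ℝ) → ℝ := fun z =>
      ‖v‖ * ((Stmt11Aux.netL κ M n * (2 * (κ n : ℝ) * Stmt11Aux.netC κ M n))
          * (1 + ∑ k, |z k|) ^ 2
        + ((Stmt11Aux.netL κ M n * (κ n : ℝ)) * (1 + ∑ k, |z k|)
          + Stmt11Aux.netL κ M n * ((1 + ∑ k, |z k|) * ∑ j, (fhat z j) ^ 2))) with hbound_def
    -- integrability of the pieces
    have intS : Integrable (fun z : Fin (κ 0) → ℝ => 1 + ∑ k, |z k|) (stdGaussian (κ 0)) :=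
      (integrable_const (1:ℝ)).add (integrable_finset_sum _ fun k _ => Stmt11Aux.int_abs k)
    have intS2 : Integrable (fun z : Fin (κ 0) → ℝ => (1 + ∑ k, |z k|) ^ 2)
        (stdGaussian (κ 0)) := by
      have hmeas : AEStronglyMeasurable (fun z : Fin (κ 0) → ℝ => (1 + ∑ k, |z k|) ^ 2)
          (stdGaussian (κ 0)) :=
        ((continuous_const.add (continuous_finset_sum _ fun k _ =>
          (continuous_apply k).abs)).pow 2).aestronglyMeasurable
      have hg : Integrable (fun z : Fin (κ 0) → ℝ =>
          2 * ((κ 0 : ℝ) * ∑ k, (z k) ^ 2) + 2) (stdGaussian (κ 0)) :=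
        (((integrable_finset_sum _ fun k _ => Stmt11Aux.int_sq k).const_mul
          (κ 0 : ℝ)).const_mul 2).add (integrable_const 2)
      refine hg.mono' hmeas (Filter.Eventually.of_forall fun z => ?_)
      rw [Real.norm_eq_abs, abs_of_nonneg (by positivity)]
      ·
        have hA : (0:ℝ) ≤ ∑ k, |z k| := Finset.sum_nonneg fun k _ => abs_nonneg _
        have h1 : (∑ k, |z k|) ^ 2 ≤ (κ 0 : ℝ) * ∑ k, |z k| ^ 2 := by
          simpa using sq_sum_le_card_mul_sum_sq (s := (Finset.univ : Finset (Fin (κ 0))))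
            (f := fun k => |z k|)
        have h2 : (∑ k, |z k| ^ 2) = ∑ k, (z k) ^ 2 :=
          Finset.sum_congr rfl fun k _ => sq_abs _
        rw [h2] at h1
        nlinarith [sq_nonneg ((∑ k, |z k|) - 1)]
    have intSQ : Integrable (fun z : Fin (κ 0) → ℝ =>
        (1 + ∑ k, |z k|) * ∑ j, (fhat z j) ^ 2) (stdGaussian (κ 0)) := by
      have e : (fun z : Fin (κ 0) → ℝ => (1 + ∑ k, |z k|) * ∑ j, (fhat z j) ^ 2)
          = fun z => (∑ j, (fhat z j) ^ 2) + ∑ k, ((∑ j, (fhat z j) ^ 2) * |z k|) := by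
        funext z
        rw [add_mul, one_mul, Finset.sum_mul]
        congr 1
        exact Finset.sum_congr rfl fun k _ => mul_comm _ _
      rw [e]
      exact hmom0.add (integrable_finset_sum _ fun k _ => hmom1 k)
    have hbound_int : Integrable bound (stdGaussian (κ 0)) := by
      rw [hbound_def]
      exact ((intS2.const_mul _).add ((intS.const_mul _).add (intSQ.const_mul _))).const_mul _
    -- measurability
    have hmeasθ : ∀ θ' : NNParams κ n,
        AEStronglyMeasurable (fun z => reluLoss κ n fhat θ' z) (stdGaussian (κ 0)) :=
      fun θ' => (Stmt11Aux.loss_measurable hfhat θ').aestronglyMeasurable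
    -- a.e. differentiability
    have hdiff : ∀ᵐ z ∂(stdGaussian (κ 0)),
        HasDerivAt (fun t : ℝ => reluLoss κ n fhat (θ + t • v) z)
          (lineDeriv ℝ (fun θ' => reluLoss κ n fhat θ' z) θ v) 0 := by
      filter_upwards [hΘd θ hθ] with z hz
      obtain ⟨D, hD⟩ := Stmt11Aux.loss_hasDeriv fhat θ v z hz
      have hld : HasLineDerivAt ℝ (fun θ' => reluLoss κ n fhat θ' z) D θ v := hD
      rw [hld.lineDeriv]
      exact hD
    -- a.e. measurability of the derivative
    have hF'meas : AEStronglyMeasurable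
        (fun z => lineDeriv ℝ (fun θ' => reluLoss κ n fhat θ' z) θ v) (stdGaussian (κ 0)) := by
      have hseq : ∀ m : ℕ, AEMeasurable (fun z =>
          (reluLoss κ n fhat (θ + (((m:ℝ)+1)⁻¹) • v) z
            - reluLoss κ n fhat (θ + (0:ℝ) • v) z) / (((m:ℝ)+1)⁻¹ - 0)) (stdGaussian (κ 0)) :=
        fun m => (((Stmt11Aux.loss_measurable hfhat _).sub
          (Stmt11Aux.loss_measurable hfhat _)).div_const _).aemeasurable
      refine (aemeasurable_of_tendsto_metrizable_ae Filter.atTop hseq ?_).aestronglyMeasurable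
      filter_upwards [hdiff] with z hz
      have hu : Filter.Tendsto (fun m : ℕ => ((m:ℝ)+1)⁻¹) Filter.atTop
          (nhdsWithin 0 {(0:ℝ)}ᶜ) := by
        refine tendsto_nhdsWithin_of_tendsto_nhds_of_eventually_within _ ?_ ?_
        · have h := tendsto_one_div_add_atTop_nhds_zero_nat (𝕜 := ℝ)
          simpa [one_div] using h
        · refine Filter.Eventually.of_forall fun m => ?_
          simp only [Set.mem_compl_iff, Set.mem_singleton_iff]
          positivity
      have hcomp := (hasDerivAt_iff_tendsto_slope.mp hz).comp hu
      refine Filter.Tendsto.congr (fun m => ?_) hcomp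
      simp only [Function.comp, slope_def_field]
    -- integrability at the base point
    have hFint : Integrable (fun z => reluLoss κ n fhat (θ + (0:ℝ) • v) z)
        (stdGaussian (κ 0)) := by
      have hθ0 : ‖θ + (0:ℝ) • v‖ ≤ M := hball 0 (by norm_num)
      have hg : Integrable (fun z : Fin (κ 0) → ℝ =>
          2 * (κ n : ℝ) * (Stmt11Aux.netC κ M n) ^ 2 * (1 + ∑ k, |z k|) ^ 2
            + 2 * ∑ j, (fhat z j) ^ 2) (stdGaussian (κ 0)) :=
        (intS2.const_mul (2 * (κ n : ℝ) * (Stmt11Aux.netC κ M n) ^ 2)).add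
          (hmom0.const_mul 2)
      refine hg.mono' (hmeasθ _) (Filter.Eventually.of_forall fun z => ?_)
      rw [Real.norm_eq_abs]
      exact Stmt11Aux.loss_bound hM fhat hθ0 z
    -- the Lipschitz property
    have h_lip : ∀ᵐ z ∂(stdGaussian (κ 0)), LipschitzOnWith (Real.nnabs (bound z))
        (fun t : ℝ => reluLoss κ n fhat (θ + t • v) z) (Metric.ball (0:ℝ) 1) := by
      refine Filter.Eventually.of_forall fun z => LipschitzOnWith.of_dist_le_mul
        fun t ht s hs => ?_
      have hS : 1 ≤ 1 + ∑ k, |z k| :=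
        le_add_of_nonneg_right (Finset.sum_nonneg fun k _ => abs_nonneg _)
      have hQ0 : (0:ℝ) ≤ ∑ j, (fhat z j) ^ 2 := Finset.sum_nonneg fun j _ => sq_nonneg _
      have hbig0 : (0:ℝ) ≤ (Stmt11Aux.netL κ M n * (2 * (κ n : ℝ) * Stmt11Aux.netC κ M n))
            * (1 + ∑ k, |z k|) ^ 2
          + ((Stmt11Aux.netL κ M n * (κ n : ℝ)) * (1 + ∑ k, |z k|)
            + Stmt11Aux.netL κ M n * ((1 + ∑ k, |z k|) * ∑ j, (fhat z j) ^ 2)) := by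
        have hk : (0:ℝ) ≤ (κ n : ℝ) := Nat.cast_nonneg _
        have b1 : (0:ℝ) ≤ (Stmt11Aux.netL κ M n * (2 * (κ n : ℝ) * Stmt11Aux.netC κ M n))
            * (1 + ∑ k, |z k|) ^ 2 :=
          mul_nonneg (mul_nonneg hL (by nlinarith)) (sq_nonneg _)
        have b2 : (0:ℝ) ≤ (Stmt11Aux.netL κ M n * (κ n : ℝ)) * (1 + ∑ k, |z k|) :=
          mul_nonneg (mul_nonneg hL hk) (by linarith)
        have b3 : (0:ℝ) ≤ Stmt11Aux.netL κ M n
            * ((1 + ∑ k, |z k|) * ∑ j, (fhat z j) ^ 2) :=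
          mul_nonneg hL (mul_nonneg (by linarith) hQ0)
        linarith
      have hb0 : (0:ℝ) ≤ bound z := by
        rw [hbound_def]
        exact mul_nonneg (norm_nonneg v) hbig0
      have hbt : |t| ≤ 1 := by
        rw [Metric.mem_ball, Real.dist_eq, sub_zero] at ht; exact ht.le
      have hbs : |s| ≤ 1 := by
        rw [Metric.mem_ball, Real.dist_eq, sub_zero] at hs; exact hs.le
      have h1 := hball t hbt
      have h2 := hball s hbs
      have hnorm : ‖(θ + t • v) - (θ + s • v)‖ = |t - s| * ‖v‖ := by
        have e : (θ + t • v) - (θ + s • v) = (t - s) • v := by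
          rw [add_sub_add_left_eq_sub, ← sub_smul]
        rw [e, norm_smul, Real.norm_eq_abs]
      rw [Real.dist_eq, Real.dist_eq, Real.coe_nnabs, abs_of_nonneg hb0]
      refine (Stmt11Aux.loss_lip' hM fhat h1 h2 z).trans ?_
      rw [hnorm, hbound_def]
      ring_nf
      exact le_refl _
    -- apply differentiation under the integral sign
    have key := hasDerivAt_integral_of_dominated_loc_of_lip
      (F := fun (t : ℝ) z => reluLoss κ n fhat (θ + t • v) z)
      (F' := fun z => lineDeriv ℝ (fun θ' => reluLoss κ n fhat θ' z) θ v)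
      (x₀ := (0:ℝ)) (bound := bound) (Metric.ball_mem_nhds (0:ℝ) one_pos)
      (Filter.Eventually.of_forall fun t => hmeasθ _) hFint hF'meas h_lip hbound_int hdiff
    exact key.2
  exact ⟨fun j l => main _, fun j => main _⟩
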